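/- If 0 ≤ λ ≤ 1 and 1 ≤ x ≤ 2, then 1 − λ(1 − 1/x) ≤ x^{−λ/(2 ln 2)}. -/

import Mathlib

/-- Lemma 1(b): if `0 ≤ λ ≤ 1` and `1 ≤ x ≤ 2`, then
`1 − λ(1 − 1/x) ≤ x^{−λ/(2 ln 2)}`. -/
theorem stmt0 (lam x : ℝ) (hlam0 : 0 ≤ lam) (hlam1 : lam ≤ 1)
    (hx1 : 1 ≤ x) (hx2 : x ≤ 2) :
    1 - lam * (1 - 1 / x) ≤ x ^ (-lam / (2 * Real.log 2)) := by
  have hx0 : (0:ℝ) < x := lt_of_lt_of_le one_pos hx1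
  have hlog2 : 0 < Real.log 2 := Real.log_pos one_lt_two
  have hkey : x * Real.log x ≤ 2 * Real.log 2 * (x - 1) := by
    have h2 := Real.convexOn_mul_log.2 (show (1:ℝ) ∈ Set.Ici 0 by norm_num)
      (show (2:ℝ) ∈ Set.Ici 0 by norm_num)
      (show (0:ℝ) ≤ 2 - x by linarith) (show (0:ℝ) ≤ x - 1 by linarith)
      (show (2 - x) + (x - 1) = 1 by ring)
    simp only [smul_eq_mul, Real.log_one, mul_one, mul_zero] at h2
    have hxe : 2 - x + (x - 1) * 2 = x := by ring
    rw [hxe] at h2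
    nlinarith [h2]
  have hlogx : Real.log x * x ≤ 2 * Real.log 2 * (x - 1) := by nlinarith [hkey]
  have heq1 : (1 - 1/x) * (2 * Real.log 2) = 2 * Real.log 2 * (x - 1) / x := by
    field_simp
  have hstep : Real.log x ≤ (1 - 1/x) * (2 * Real.log 2) := by
    rw [heq1, le_div_iff₀ hx0]; exact hlogx
  have hmul : lam * Real.log x ≤ lam * ((1 - 1/x) * (2 * Real.log 2)) :=
    mul_le_mul_of_nonneg_left hstep hlam0
  have h1 : 1 - lam * (1 - 1 / x) ≤ 1 + (-lam/(2*Real.log 2)) * Real.log x := by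
    have heq2 : (-lam/(2*Real.log 2)) * Real.log x
        = -(lam * Real.log x) / (2 * Real.log 2) := by ring
    rw [heq2]
    have h : -(lam * (1 - 1/x)) ≤ -(lam * Real.log x) / (2 * Real.log 2) := by
      rw [le_div_iff₀ (by positivity : (0:ℝ) < 2 * Real.log 2)]
      nlinarith [hmul]
    linarith
  have h2 : 1 + (-lam/(2*Real.log 2)) * Real.log x
      ≤ Real.exp ((-lam/(2*Real.log 2)) * Real.log x) := by
    linarith [Real.add_one_le_exp ((-lam/(2*Real.log 2)) * Real.log x)]
  have h3 : x ^ (-lam / (2 * Real.log 2))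
      = Real.exp ((-lam/(2*Real.log 2)) * Real.log x) := by
    rw [Real.rpow_def_of_pos hx0, mul_comm]
  rw [h3]
  linarith
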